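/- Suppose X is a nonempty zero-dimensional Polish space without isolated points (i.e., X is totally separated/has a basis of clopen sets and is perfect). Then there exists a continuous bijection from Baire space ω^ω onto X. -/

import Mathlib

open Set Filter Topology TopologicalSpace Function ENNReal

namespace Stmt8

variable {X : Type*} [MetricSpace X]

/-- A "type B" piece: a point together with a vanishing sequence of clopen sets. -/
def IsPieceB (A : Set X) : Prop :=
  ∃ (x : X) (C : ℕ → Set X),
    (∀ n, IsClopen (C n)) ∧ (∀ n, (C n).Nonempty) ∧
    Pairwise (Disjoint on C) ∧ (∀ n, x ∉ C n) ∧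
    A = insert x (⋃ n, C n) ∧
    Tendsto (fun n => EMetric.diam (insert x (C n))) atTop (𝓝 0)

def IsPiece (A : Set X) : Prop := A.Nonempty ∧ (IsClopen A ∨ IsPieceB A)

lemma isPiece_of_clopen {A : Set X} (h : IsClopen A) (hne : A.Nonempty) : IsPiece A :=
  ⟨hne, Or.inl h⟩

lemma IsPieceB.isClosed {A : Set X} (h : IsPieceB A) : IsClosed A := by
  obtain ⟨x, C, hcl, -, -, -, rfl, htd⟩ := h
  rw [← isOpen_compl_iff, isOpen_iff_mem_nhds]
  intro y hy
  simp only [mem_compl_iff, mem_insert_iff, mem_iUnion, not_or, not_exists] at hy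
  obtain ⟨hyx, hyC⟩ := hy
  set r : ℝ≥0∞ := min (edist y x) 1 with hr
  have hr0 : 0 < r := lt_min (by simpa [edist_pos] using hyx) one_pos
  have hrt : r ≠ ⊤ := ((min_le_right _ _).trans_lt (by norm_num)).ne
  have hr20 : (0 : ℝ≥0∞) < r / 2 := ENNReal.half_pos hr0.ne'
  have hev : ∀ᶠ n in atTop, EMetric.diam (insert x (C n)) < r / 2 :=
    htd.eventually (Iio_mem_nhds hr20)
  obtain ⟨N, hN⟩ := eventually_atTop.1 hev
  have hUopen : IsOpen (EMetric.ball y (r / 2) \ ⋃ n ∈ Finset.range N, C n) := by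
    apply EMetric.isOpen_ball.sdiff
    exact isClosed_biUnion_finset fun n _ => (hcl n).isClosed
  apply mem_of_superset (hUopen.mem_nhds ?_)
  · rintro z ⟨hz1, hz2⟩
    simp only [mem_compl_iff, mem_insert_iff, mem_iUnion, not_or, not_exists]
    have hzxr : edist y z < r / 2 := by simpa [edist_comm] using EMetric.mem_ball.1 hz1
    constructor
    · rintro rfl
      exact absurd (hzxr.trans (ENNReal.half_lt_self hr0.ne' hrt)) (not_lt.2 (min_le_left _ _))
    · intro n hzn
      by_cases hn : n < N
      · exact hz2 (mem_biUnion (Finset.mem_range.2 hn) hzn)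
      · have h1 : edist z x ≤ r / 2 := by
          refine le_trans ?_ (hN n (not_lt.1 hn)).le
          exact EMetric.edist_le_diam_of_mem (mem_insert_of_mem _ hzn) (mem_insert _ _)
        have h2 : edist y x < r := by
          calc edist y x ≤ edist y z + edist z x := edist_triangle _ _ _
          _ < r / 2 + r / 2 := ENNReal.add_lt_add_of_lt_of_le (h1.trans_lt (ENNReal.div_lt_top hrt (by norm_num))).ne hzxr h1
          _ = r := ENNReal.add_halves r
        exact absurd h2 (not_lt.2 (min_le_left _ _))
  · refine ⟨EMetric.mem_ball_self hr20, ?_⟩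
    simp only [mem_iUnion, not_exists]
    exact fun n _ => hyC n

lemma IsPiece.isClosed {A : Set X} (h : IsPiece A) : IsClosed A := by
  rcases h.2 with h | h
  · exact h.isClosed
  · exact h.isClosed



lemma exists_clopen_mem (hbasis : IsTopologicalBasis {s : Set X | IsClopen s})
    {U : Set X} (hU : IsOpen U) {x : X} (hx : x ∈ U) :
    ∃ V : Set X, IsClopen V ∧ x ∈ V ∧ V ⊆ U := by
  obtain ⟨V, hV, h1, h2⟩ := hbasis.exists_subset_of_mem_open hx hU
  exact ⟨V, hV, h1, h2⟩

lemma two_mul_half (ε : ℝ≥0∞) : 2 * (ε / 2) = ε := by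
  rw [ENNReal.mul_div_cancel two_ne_zero ENNReal.ofNat_ne_top]

lemma isClopen_partialSups {W : ℕ → Set X} (h : ∀ n, IsClopen (W n)) (n : ℕ) :
    IsClopen (partialSups W n) := by
  induction n with
  | zero => simpa using h 0
  | succ n ih => rw [partialSups_add_one]; exact ih.union (h (n+1))

lemma isClopen_disjointed {W : ℕ → Set X} (h : ∀ n, IsClopen (W n)) (n : ℕ) :
    IsClopen (disjointed W n) := by
  cases n with
  | zero => simpa [disjointed_zero] using h 0
  | succ n => rw [disjointed_add_one]; exact (h (n+1)).diff (isClopen_partialSups h n)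

/-- Partition a clopen set into countably many small clopen (possibly empty) sets. -/
lemma clopen_partition (hbasis : IsTopologicalBasis {s : Set X | IsClopen s})
    [SecondCountableTopology X] {C : Set X} (hC : IsClopen C) {ε : ℝ≥0∞} (hε : 0 < ε) :
    ∃ D : ℕ → Set X, (∀ n, IsClopen (D n)) ∧ (∀ n, D n ⊆ C) ∧
      (∀ n, EMetric.diam (D n) ≤ ε) ∧ Pairwise (Disjoint on D) ∧ (⋃ n, D n) = C := by
  rcases eq_empty_or_nonempty C with rfl | hne
  · exact ⟨fun _ => ∅, fun _ => isClopen_empty, by simp, by simp [EMetric.diam],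
      fun i j _ => by simp [Function.onFun], by simp⟩
  have hcov : ∀ x : C, ∃ V : Set X, IsClopen V ∧ (x : X) ∈ V ∧ V ⊆ C ∩ EMetric.ball x (ε/2) := by
    intro x
    exact exists_clopen_mem hbasis (hC.isOpen.inter EMetric.isOpen_ball)
      ⟨x.2, EMetric.mem_ball_self (ENNReal.half_pos hε.ne')⟩
  choose V hVclopen hVmem hVsub using hcov
  obtain ⟨T, hTc, hTu⟩ := TopologicalSpace.isOpen_iUnion_countable V (fun x => (hVclopen x).isOpen)
  have hTunion : ⋃ x ∈ T, V x = C := by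
    rw [hTu]
    apply Subset.antisymm
    · exact iUnion_subset fun x => (hVsub x).trans inter_subset_left
    · intro y hy; exact mem_iUnion.2 ⟨⟨y, hy⟩, hVmem _⟩
  have hTne : T.Nonempty := by
    rcases hne with ⟨y, hy⟩
    have hy' : y ∈ ⋃ x ∈ T, V x := by rw [hTunion]; exact hy
    rcases mem_iUnion₂.1 hy' with ⟨x, hxT, _⟩
    exact ⟨x, hxT⟩
  obtain ⟨g, hg⟩ := Set.Countable.exists_eq_range hTc hTne
  set W : ℕ → Set X := fun n => V (g n) with hW
  have hWclopen : ∀ n, IsClopen (W n) := fun n => hVclopen _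
  have hWsub : ∀ n, W n ⊆ C := fun n => (hVsub _).trans inter_subset_left
  have hWdiam : ∀ n, EMetric.diam (W n) ≤ ε := by
    intro n
    calc EMetric.diam (W n) ≤ EMetric.diam (EMetric.ball (g n : X) (ε/2)) :=
          EMetric.diam_mono ((hVsub _).trans inter_subset_right)
    _ ≤ 2 * (ε / 2) := EMetric.diam_ball
    _ = ε := two_mul_half ε
  have hWunion : (⋃ n, W n) = C := by
    rw [← hTunion, hg]
    ext y
    simp only [hW, mem_iUnion, hg, mem_range]
    constructor
    · rintro ⟨i, h⟩; exact ⟨g i, ⟨i, rfl⟩, h⟩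
    · rintro ⟨i, ⟨j, rfl⟩, h⟩; exact ⟨j, h⟩
  refine ⟨disjointed W, isClopen_disjointed hWclopen, ?_, ?_, disjoint_disjointed W, ?_⟩
  · exact fun n => (disjointed_subset W n).trans (hWsub n)
  · exact fun n => (EMetric.diam_mono (disjointed_subset W n)).trans (hWdiam n)
  · rw [iUnion_disjointed, hWunion]

/-- Split off a point with a vanishing sequence of clopen collars inside a nonempty clopen set. -/
lemma point_split (hbasis : IsTopologicalBasis {s : Set X | IsClopen s})
    (hperf : ∀ x : X, ¬ IsOpen ({x} : Set X)) {C : Set X} (hC : IsClopen C)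
    (hne : C.Nonempty) {ε : ℝ≥0∞} (hε : 0 < ε) (hεt : ε ≠ ⊤) :
    ∃ (x : X) (C' : Set X) (E : ℕ → Set X),
      x ∈ C' ∧ C' ⊆ C ∧ IsClopen C' ∧ EMetric.diam C' ≤ ε ∧
      (∀ k, IsClopen (E k)) ∧ (∀ k, (E k).Nonempty) ∧ Pairwise (Disjoint on E) ∧
      (∀ k, x ∉ E k) ∧ insert x (⋃ k, E k) = C' ∧
      (∀ k, EMetric.diam (insert x (E k)) ≤ ε * 2⁻¹ ^ k) := by
  classical
  obtain ⟨x, hx⟩ := hne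
  set ρ : ℕ → ℝ≥0∞ := fun k => ε * 2⁻¹ ^ (k + 1) with hρdef
  have hhalf : (0:ℝ≥0∞) < 2⁻¹ := ENNReal.inv_pos.2 ENNReal.ofNat_ne_top
  have hρpos : ∀ k, 0 < ρ k := fun k => ENNReal.mul_pos hε.ne' (ENNReal.pow_pos hhalf (k+1)).ne'
  have h2ρ : ∀ k, 2 * ρ k = ε * 2⁻¹ ^ k := by
    intro k
    show 2 * (ε * 2⁻¹ ^ (k + 1)) = ε * 2⁻¹ ^ k
    have hkey : (2:ℝ≥0∞) * 2⁻¹ ^ (k+1) = 2⁻¹ ^ k := by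
      rw [pow_succ, mul_comm ((2:ℝ≥0∞)⁻¹ ^ k) 2⁻¹, ← mul_assoc,
        ENNReal.mul_inv_cancel two_ne_zero ENNReal.ofNat_ne_top, one_mul]
    rw [show (2:ℝ≥0∞) * (ε * 2⁻¹ ^ (k+1)) = ε * (2 * 2⁻¹ ^ (k+1)) by ring, hkey]
  have hρtend : Tendsto ρ atTop (𝓝 0) := by
    have h1 : Tendsto (fun k : ℕ => (2⁻¹:ℝ≥0∞) ^ k) atTop (𝓝 0) :=
      ENNReal.tendsto_pow_atTop_nhds_zero_of_lt_one (by
        rw [ENNReal.inv_lt_one]; exact one_lt_two)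
    have h2 : Tendsto (fun k : ℕ => (2⁻¹:ℝ≥0∞) ^ (k+1)) atTop (𝓝 0) :=
      h1.comp (tendsto_add_atTop_nat 1)
    simpa [hρdef] using ENNReal.Tendsto.const_mul h2 (Or.inr hεt)
  -- the invariant
  set P : ℕ → Set X → Prop :=
    fun k D => IsClopen D ∧ x ∈ D ∧ D ⊆ C ∧ D ⊆ EMetric.ball x (ρ k) with hPdef
  have hstep : ∀ k (D : Set X), ∃ D' : Set X,
      P k D → (P (k+1) D' ∧ D' ⊆ D ∧ (D \ D').Nonempty) := by
    intro k D
    by_cases h : P k D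
    · obtain ⟨hclo, hxD, hDC, -⟩ := h
      have hne' : ∃ y ∈ D, y ≠ x := by
        by_contra hcon
        push_neg at hcon
        have : D = {x} := Subset.antisymm (fun y hy => hcon y hy) (by simpa using hxD)
        exact hperf x (this ▸ hclo.isOpen)
      obtain ⟨y, hyD, hyx⟩ := hne'
      have hxy : (0:ℝ≥0∞) < edist x y := by rwa [edist_pos, ne_comm]
      set δ : ℝ≥0∞ := min (ρ (k+1)) (edist x y) with hδ
      obtain ⟨V, hVclo, hVx, hVsub⟩ := exists_clopen_mem hbasis
        (hclo.isOpen.inter EMetric.isOpen_ball)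
        (⟨hxD, EMetric.mem_ball_self (lt_min (hρpos _) hxy)⟩ : x ∈ D ∩ EMetric.ball x δ)
      refine ⟨V, fun _ => ⟨⟨hVclo, hVx, (hVsub.trans inter_subset_left).trans hDC,
        (hVsub.trans inter_subset_right).trans (EMetric.ball_subset_ball (min_le_left _ _))⟩,
        hVsub.trans inter_subset_left, ⟨y, hyD, ?_⟩⟩⟩
      intro hyV
      have : edist y x < δ := hVsub hyV |>.2
      rw [edist_comm] at this
      exact absurd (this.trans_le (min_le_right _ _)) (lt_irrefl _)
    · exact ⟨∅, fun hh => absurd hh h⟩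
  choose F hF using hstep
  obtain ⟨D0, hD0clo, hD0x, hD0sub⟩ := exists_clopen_mem hbasis
    (hC.isOpen.inter EMetric.isOpen_ball)
    (⟨hx, EMetric.mem_ball_self (hρpos 0)⟩ : x ∈ C ∩ EMetric.ball x (ρ 0))
  set D : ℕ → Set X := fun k => Nat.rec D0 (fun k Dk => F k Dk) k with hDdef
  have hDsucc : ∀ k, D (k+1) = F k (D k) := fun k => rfl
  have hP : ∀ k, P k (D k) := by
    intro k
    induction k with
    | zero => exact ⟨hD0clo, hD0x, hD0sub.trans inter_subset_left, hD0sub.trans inter_subset_right⟩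
    | succ n ih => rw [hDsucc]; exact (hF n (D n) ih).1
  have hchain : ∀ k, D (k+1) ⊆ D k := fun k => (hF k (D k) (hP k)).2.1
  have hEne : ∀ k, (D k \ D (k+1)).Nonempty := fun k => (hF k (D k) (hP k)).2.2
  have hmono : ∀ j k, j ≤ k → D k ⊆ D j := by
    intro j k hjk
    induction k with
    | zero => rw [Nat.le_zero.1 hjk]
    | succ n ih =>
      rcases Nat.lt_or_ge j (n+1) with h | h
      · exact (hchain n).trans (ih (Nat.lt_succ_iff.1 h))
      · rw [Nat.le_antisymm hjk h]
  set E : ℕ → Set X := fun k => D k \ D (k+1) with hEdef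
  have hEclo : ∀ k, IsClopen (E k) := fun k => ((hP k).1).diff ((hP (k+1)).1)
  have hExmem : ∀ k, x ∉ E k := fun k hk => hk.2 (hP (k+1)).2.1
  have hEdisj : Pairwise (Disjoint on E) := by
    have key : ∀ j k, j < k → Disjoint (E j) (E k) := by
      intro j k h
      rw [Set.disjoint_left]
      intro a haj hak
      exact haj.2 (hmono (j+1) k h hak.1)
    intro j k h
    rcases Nat.lt_or_gt_of_ne h with h' | h'
    · exact key j k h'
    · exact (key k j h').symm
  have hEins : insert x (⋃ k, E k) = D 0 := by
    apply Subset.antisymm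
    · rintro z (rfl | hz)
      · exact (hP 0).2.1
      · obtain ⟨k, hk⟩ := mem_iUnion.1 hz
        exact hmono 0 k (Nat.zero_le k) hk.1
    · intro z hz
      by_cases hzx : z = x
      · exact hzx ▸ mem_insert _ _
      · have hzpos : (0:ℝ≥0∞) < edist z x := by rwa [edist_pos]
        have hex : ∃ k, z ∉ D k := by
          obtain ⟨k, hk⟩ := (hρtend.eventually (Iio_mem_nhds hzpos)).exists
          exact ⟨k, fun hzk => absurd ((hP k).2.2.2 hzk) (fun hb => absurd hb (by
            exact fun hlt => absurd ((EMetric.mem_ball.1 hlt).trans hk) (lt_irrefl _)))⟩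
        have h0 : ¬ z ∉ D 0 := fun h => h hz
        set k0 := Nat.find hex with hk0
        have hk0pos : k0 ≠ 0 := fun h => h0 (h ▸ Nat.find_spec hex)
        obtain ⟨m, hm⟩ := Nat.exists_eq_succ_of_ne_zero hk0pos
        refine mem_insert_of_mem _ (mem_iUnion.2 ⟨m, ?_, ?_⟩)
        · by_contra hcon
          have hlt : m < Nat.find hex := by rw [← hk0, hm]; exact m.lt_succ_self
          exact Nat.find_min hex hlt hcon
        · have hsp := Nat.find_spec hex
          rw [← hk0, hm] at hsp
          exact hsp
  have hEdiam : ∀ k, EMetric.diam (insert x (E k)) ≤ ε * 2⁻¹ ^ k := by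
    intro k
    have hsub : insert x (E k) ⊆ EMetric.ball x (ρ k) := by
      rintro z (rfl | hz)
      · exact EMetric.mem_ball_self (hρpos k)
      · exact (hP k).2.2.2 hz.1
    calc EMetric.diam (insert x (E k)) ≤ EMetric.diam (EMetric.ball x (ρ k)) :=
          EMetric.diam_mono hsub
    _ ≤ 2 * ρ k := EMetric.diam_ball
    _ = ε * 2⁻¹ ^ k := h2ρ k
  refine ⟨x, D 0, E, (hP 0).2.1, (hP 0).2.2.1, (hP 0).1, ?_, hEclo, hEne, hEdisj, hExmem,
    hEins, hEdiam⟩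
  calc EMetric.diam (D 0) ≤ EMetric.diam (EMetric.ball x (ρ 0)) :=
        EMetric.diam_mono (hP 0).2.2.2
  _ ≤ 2 * ρ 0 := EMetric.diam_ball
  _ = ε * 2⁻¹ ^ 0 := h2ρ 0
  _ = ε := by simp


/-- Enumerate the nonempty members of a disjoint family (one distinguished nonempty set `T`,
infinitely many nonempty `G k`, possibly-empty `L n`) bijectively by `ℕ`. -/
lemma enum_pieces {ε : ℝ≥0∞} (T : Set X) (G L : ℕ → Set X)
    (hT : (IsPiece T ∧ EMetric.diam T ≤ ε) ∧ T.Nonempty)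
    (hG : ∀ k, (IsPiece (G k) ∧ EMetric.diam (G k) ≤ ε) ∧ (G k).Nonempty)
    (hL : ∀ n, (L n).Nonempty → IsPiece (L n) ∧ EMetric.diam (L n) ≤ ε)
    (hd1 : ∀ k, Disjoint T (G k)) (hd2 : ∀ n, Disjoint T (L n))
    (hd3 : ∀ k n, Disjoint (G k) (L n))
    (hd4 : Pairwise (Disjoint on G)) (hd5 : Pairwise (Disjoint on L)) :
    ∃ B : ℕ → Set X, (∀ n, IsPiece (B n) ∧ EMetric.diam (B n) ≤ ε) ∧
      Pairwise (Disjoint on B) ∧ (⋃ n, B n) = T ∪ (⋃ k, G k) ∪ (⋃ n, L n) := by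
  classical
  set 𝒞 : Set (Set X) := {S | S.Nonempty ∧ (S = T ∨ (∃ k, S = G k) ∨ (∃ n, S = L n))} with h𝒞
  have hcount : 𝒞.Countable := by
    have hsub : 𝒞 ⊆ insert T (range G ∪ range L) := by
      rintro S ⟨-, rfl | ⟨k, rfl⟩ | ⟨n, rfl⟩⟩
      · exact mem_insert _ _
      · exact mem_insert_of_mem _ (Or.inl ⟨k, rfl⟩)
      · exact mem_insert_of_mem _ (Or.inr ⟨n, rfl⟩)
    exact Set.Countable.mono hsub (((countable_range G).union (countable_range L)).insert T)
  have hGinj : Function.Injective G := by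
    intro i j hij
    by_contra hne
    have := hd4 hne
    rw [Function.onFun, hij] at this
    exact absurd (disjoint_self.1 this) (by
      rcases (hG j).2 with ⟨y, hy⟩
      exact fun hbot => by rw [hbot] at hy; exact hy)
  have hinf : 𝒞.Infinite := by
    refine (Set.infinite_range_of_injective hGinj).mono ?_
    rintro S ⟨k, rfl⟩
    exact ⟨(hG k).2, Or.inr (Or.inl ⟨k, rfl⟩)⟩
  have hC : Countable ↥𝒞 := hcount.to_subtype
  have hI : Infinite ↥𝒞 := hinf.to_subtype
  obtain ⟨e⟩ : Nonempty (ℕ ≃ ↥𝒞) := nonempty_equiv_of_countable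
  set B : ℕ → Set X := fun n => (e n : Set X) with hB
  have hBmem : ∀ n, B n ∈ 𝒞 := fun n => (e n).2
  have hdisj𝒞 : ∀ S₁ ∈ 𝒞, ∀ S₂ ∈ 𝒞, S₁ ≠ S₂ → Disjoint S₁ S₂ := by
    rintro S₁ ⟨hne₁, hc₁⟩ S₂ ⟨hne₂, hc₂⟩ hne
    rcases hc₁ with rfl | ⟨k, rfl⟩ | ⟨n, rfl⟩ <;> rcases hc₂ with rfl | ⟨k', rfl⟩ | ⟨n', rfl⟩
    · exact absurd rfl hne
    · exact hd1 k'
    · exact hd2 n'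
    · exact (hd1 k).symm
    · exact hd4 (fun h => hne (by rw [h]))
    · exact hd3 k n'
    · exact (hd2 n).symm
    · exact (hd3 k' n).symm
    · exact hd5 (fun h => hne (by rw [h]))
  refine ⟨B, ?_, ?_, ?_⟩
  · intro n
    obtain ⟨hne', hc⟩ := hBmem n
    rcases hc with h | ⟨k, h⟩ | ⟨m, h⟩
    · rw [h]; exact hT.1
    · rw [h]; exact (hG k).1
    · rw [h]; exact hL m (h ▸ hne')
  · intro i j hij
    have hBne : B i ≠ B j := by
      intro h
      exact hij (e.injective (Subtype.coe_injective h))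
    exact hdisj𝒞 _ (hBmem i) _ (hBmem j) hBne
  · apply Subset.antisymm
    · apply iUnion_subset
      intro n
      obtain ⟨-, hc⟩ := hBmem n
      rcases hc with h | ⟨k, h⟩ | ⟨m, h⟩
      · rw [h]; exact subset_union_left.trans subset_union_left
      · rw [h]; exact (subset_iUnion G k).trans (subset_union_right.trans subset_union_left)
      · rw [h]; exact (subset_iUnion L m).trans subset_union_right
    · have key : ∀ S ∈ 𝒞, S ⊆ ⋃ n, B n := by
        intro S hS
        have : S = B (e.symm ⟨S, hS⟩) := by simp [hB]
        rw [this]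
        exact subset_iUnion B _
      rintro z (hz | hz)
      · rcases hz with hz | hz
        · exact key T ⟨hT.2, Or.inl rfl⟩ hz
        · obtain ⟨k, hk⟩ := mem_iUnion.1 hz
          exact key (G k) ⟨(hG k).2, Or.inr (Or.inl ⟨k, rfl⟩)⟩ hk
      · obtain ⟨n, hn⟩ := mem_iUnion.1 hz
        exact key (L n) ⟨⟨z, hn⟩, Or.inr (Or.inr ⟨n, rfl⟩)⟩ hn

lemma split (hbasis : IsTopologicalBasis {s : Set X | IsClopen s})
    (hperf : ∀ x : X, ¬ IsOpen ({x} : Set X)) [SecondCountableTopology X]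
    {A : Set X} (hA : IsPiece A) {ε : ℝ≥0∞} (hε : 0 < ε) :
    ∃ B : ℕ → Set X, (∀ n, IsPiece (B n) ∧ EMetric.diam (B n) ≤ ε) ∧
      Pairwise (Disjoint on B) ∧ (⋃ n, B n) = A := by
  classical
  set δ : ℝ≥0∞ := min ε 1 with hδdef
  have hδ0 : 0 < δ := lt_min hε one_pos
  have hδt : δ ≠ ⊤ := ((min_le_right _ _).trans_lt (by norm_num)).ne
  have hδε : δ ≤ ε := min_le_left _ _
  have hδ20 : (0:ℝ≥0∞) < δ / 2 := ENNReal.half_pos hδ0.ne'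
  have hδ2t : δ / 2 ≠ ⊤ := (ENNReal.div_lt_top hδt (by norm_num)).ne
  have hδ2δ : δ / 2 ≤ δ := ENNReal.half_le_self
  obtain ⟨hAne, hAcase⟩ := hA
  rcases hAcase with hclo | hBB
  · -- clopen case
    obtain ⟨x, C', E, hxC', hC'A, hC'clo, hC'diam, hEclo, hEne, hEdisj, hExmem, hEins, hEdiam⟩ :=
      point_split hbasis hperf hclo hAne (ε := δ/2) hδ20 hδ2t
    have hEsub : ∀ k, E k ⊆ C' := by
      intro k z hz
      rw [← hEins]
      exact mem_insert_of_mem _ (mem_iUnion.2 ⟨k, hz⟩)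
    set T : Set X := insert x (⋃ k, E (2*k)) with hTdef
    have hTsub : T ⊆ C' := by
      rintro z (rfl | hz)
      · exact hxC'
      · obtain ⟨k, hk⟩ := mem_iUnion.1 hz
        exact hEsub _ hk
    have hTpieceB : IsPieceB T := by
      refine ⟨x, fun k => E (2*k), fun k => hEclo _, fun k => hEne _, ?_, fun k => hExmem _,
        rfl, ?_⟩
      · intro i j hij
        exact hEdisj (by omega)
      · have h1 : Tendsto (fun n : ℕ => (2⁻¹:ℝ≥0∞) ^ n) atTop (𝓝 0) :=
          ENNReal.tendsto_pow_atTop_nhds_zero_of_lt_one (by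
            rw [ENNReal.inv_lt_one]; exact one_lt_two)
        have h2 : Tendsto (fun k : ℕ => (2⁻¹:ℝ≥0∞) ^ (2*k)) atTop (𝓝 0) :=
          h1.comp (StrictMono.tendsto_atTop (by intro a b h; omega))
        have hub : Tendsto (fun k : ℕ => (δ/2) * 2⁻¹ ^ (2*k)) atTop (𝓝 0) := by
          simpa using ENNReal.Tendsto.const_mul h2 (Or.inr hδ2t)
        exact tendsto_of_tendsto_of_tendsto_of_le_of_le tendsto_const_nhds hub
          (fun k => zero_le) (fun k => hEdiam (2*k))
    set G : ℕ → Set X := fun k => E (2*k+1) with hGdef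
    set L' : Set X := A \ C' with hL'def
    obtain ⟨L, hLclo, hLsub, hLdiam, hLdisjp, hLunion⟩ :=
      clopen_partition hbasis (hclo.diff hC'clo) (ε := δ) hδ0
    have hd1 : ∀ k, Disjoint T (G k) := by
      intro k
      rw [Set.disjoint_left]
      rintro z (rfl | hz)
      · exact hExmem _
      · obtain ⟨j, hj⟩ := mem_iUnion.1 hz
        intro hzk
        exact Set.disjoint_left.1 (hEdisj (show 2*j ≠ 2*k+1 by omega)) hj hzk
    have hd2 : ∀ n, Disjoint T (L n) := fun n =>
      Disjoint.mono hTsub (hLsub n) disjoint_sdiff_self_right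
    have hd3 : ∀ k n, Disjoint (G k) (L n) := fun k n =>
      Disjoint.mono (hEsub _) (hLsub n) disjoint_sdiff_self_right
    have hd4 : Pairwise (Disjoint on G) := fun i j hij =>
      hEdisj (show 2*i+1 ≠ 2*j+1 by omega)
    obtain ⟨B, hB1, hB2, hB3⟩ := enum_pieces (ε := ε) T G L
      ⟨⟨⟨⟨x, mem_insert _ _⟩, Or.inr hTpieceB⟩,
        (EMetric.diam_mono hTsub).trans (hC'diam.trans (hδ2δ.trans hδε))⟩, ⟨x, mem_insert _ _⟩⟩
      (fun k => ⟨⟨isPiece_of_clopen (hEclo _) (hEne _),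
        (EMetric.diam_mono (hEsub _)).trans (hC'diam.trans (hδ2δ.trans hδε))⟩, hEne _⟩)
      (fun n hn => ⟨isPiece_of_clopen (hLclo n) hn, (hLdiam n).trans hδε⟩)
      hd1 hd2 hd3 hd4 hLdisjp
    refine ⟨B, hB1, hB2, ?_⟩
    rw [hB3, hLunion]
    have h1 : T ∪ (⋃ k, G k) = C' := by
      rw [← hEins]
      ext z
      simp only [hTdef, hGdef, mem_union, mem_insert_iff, mem_iUnion]
      constructor
      · rintro ((rfl | ⟨k, hk⟩) | ⟨k, hk⟩)
        · exact Or.inl rfl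
        · exact Or.inr ⟨2*k, hk⟩
        · exact Or.inr ⟨2*k+1, hk⟩
      · rintro (rfl | ⟨n, hn⟩)
        · exact Or.inl (Or.inl rfl)
        · rcases Nat.even_or_odd n with ⟨k, hk⟩ | ⟨k, hk⟩
          · exact Or.inl (Or.inr ⟨k, by rw [show 2*k = n by omega]; exact hn⟩)
          · exact Or.inr ⟨k, by rw [show 2*k+1 = n by omega]; exact hn⟩
    rw [h1, union_diff_cancel hC'A]
  · -- type B case
    obtain ⟨x, C, hCclo, hCne, hCdisj, hCx, hAeq, htd⟩ := hBB
    obtain ⟨N, hN⟩ := eventually_atTop.1 (htd.eventually (Iio_mem_nhds hδ20))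
    set T : Set X := insert x (⋃ k, C (N + 2*k)) with hTdef
    have hdx : ∀ p ∈ T, edist p x ≤ δ / 2 := by
      rintro p (rfl | hp)
      · simp
      · obtain ⟨k, hk⟩ := mem_iUnion.1 hp
        refine le_trans ?_ (hN (N + 2*k) (by omega)).le
        exact EMetric.edist_le_diam_of_mem (mem_insert_of_mem _ hk) (mem_insert _ _)
    have hTdiam : EMetric.diam T ≤ δ := by
      refine EMetric.diam_le fun p hp q hq => ?_
      calc edist p q ≤ edist p x + edist x q := edist_triangle _ _ _
      _ ≤ δ/2 + δ/2 := add_le_add (hdx p hp) (by rw [edist_comm]; exact hdx q hq)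
      _ = δ := ENNReal.add_halves δ
    have hTpieceB : IsPieceB T := by
      refine ⟨x, fun k => C (N + 2*k), fun k => hCclo _, fun k => hCne _, ?_, fun k => hCx _,
        rfl, ?_⟩
      · intro i j hij
        exact hCdisj (by omega)
      · exact htd.comp (StrictMono.tendsto_atTop (fun a b h => by show N + 2*a < N + 2*b; omega))
    set G : ℕ → Set X := fun k => C (N + 2*k + 1) with hGdef
    have hGdiam : ∀ k, EMetric.diam (G k) ≤ δ / 2 := by
      intro k
      refine le_trans (EMetric.diam_mono (subset_insert x _)) (hN (N + 2*k + 1) (by omega)).le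
    choose Dn hDn1 hDn2 hDn3 hDn4 hDn5 using
      fun n => clopen_partition hbasis (hCclo n) (ε := δ) hδ0
    set L : ℕ → Set X := fun m => if m.unpair.1 < N then Dn m.unpair.1 m.unpair.2 else ∅
      with hLdef
    have hLsub : ∀ m, m.unpair.1 < N → L m ⊆ C m.unpair.1 := by
      intro m hm
      simp only [hLdef, if_pos hm]
      exact hDn2 _ _
    have hLempty : ∀ m, ¬ m.unpair.1 < N → L m = ∅ := by
      intro m hm
      simp only [hLdef, if_neg hm]
    have hLpiece : ∀ m, (L m).Nonempty → IsPiece (L m) ∧ EMetric.diam (L m) ≤ ε := by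
      intro m hm
      by_cases h : m.unpair.1 < N
      · have hclo' : IsClopen (L m) := by
          simp only [hLdef, if_pos h]; exact hDn1 _ _
        have hdi : EMetric.diam (L m) ≤ δ := by
          have hh : L m = Dn m.unpair.1 m.unpair.2 := by simp only [hLdef, if_pos h]
          rw [hh]; exact hDn3 _ _
        exact ⟨isPiece_of_clopen hclo' hm, hdi.trans hδε⟩
      · rw [hLempty m h] at hm
        exact absurd hm (by simp)
    have hd1 : ∀ k, Disjoint T (G k) := by
      intro k
      rw [Set.disjoint_left]
      rintro z (rfl | hz)
      · exact hCx _
      · obtain ⟨j, hj⟩ := mem_iUnion.1 hz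
        intro hzk
        exact Set.disjoint_left.1 (hCdisj (show N + 2*j ≠ N + 2*k + 1 by omega)) hj hzk
    have hd2 : ∀ m, Disjoint T (L m) := by
      intro m
      by_cases h : m.unpair.1 < N
      · rw [Set.disjoint_left]
        rintro z (rfl | hz) hzL
        · exact hCx _ (hLsub m h hzL)
        · obtain ⟨j, hj⟩ := mem_iUnion.1 hz
          exact Set.disjoint_left.1 (hCdisj (show N + 2*j ≠ m.unpair.1 by omega)) hj
            (hLsub m h hzL)
      · rw [hLempty m h]; exact disjoint_empty _
    have hd3 : ∀ k m, Disjoint (G k) (L m) := by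
      intro k m
      by_cases h : m.unpair.1 < N
      · exact Disjoint.mono le_rfl (hLsub m h) (hCdisj (show N + 2*k + 1 ≠ m.unpair.1 by omega))
      · rw [hLempty m h]; exact disjoint_empty _
    have hd4 : Pairwise (Disjoint on G) := fun i j hij =>
      hCdisj (show N + 2*i + 1 ≠ N + 2*j + 1 by omega)
    have hd5 : Pairwise (Disjoint on L) := by
      intro i j hij
      by_cases hi : i.unpair.1 < N
      · by_cases hj : j.unpair.1 < N
        · by_cases he : i.unpair.1 = j.unpair.1
          · have hne2 : i.unpair.2 ≠ j.unpair.2 := by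
              intro h2
              apply hij
              rw [← Nat.pair_unpair i, ← Nat.pair_unpair j, he, h2]
            have hthis : Disjoint (Dn i.unpair.1 i.unpair.2) (Dn i.unpair.1 j.unpair.2) :=
              hDn4 i.unpair.1 hne2
            simp only [Function.onFun, hLdef, if_pos hi, if_pos hj, ← he]
            exact hthis
          · exact Disjoint.mono (hLsub i hi) (hLsub j hj) (hCdisj he)
        · rw [Function.onFun, hLempty j hj]; exact disjoint_empty _
      · rw [Function.onFun, hLempty i hi]; exact empty_disjoint _
    obtain ⟨B, hB1, hB2, hB3⟩ := enum_pieces (ε := ε) T G L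
      ⟨⟨⟨⟨x, mem_insert _ _⟩, Or.inr hTpieceB⟩, hTdiam.trans hδε⟩, ⟨x, mem_insert _ _⟩⟩
      (fun k => ⟨⟨isPiece_of_clopen (hCclo _) (hCne _), (hGdiam k).trans (hδ2δ.trans hδε)⟩,
        hCne _⟩)
      hLpiece hd1 hd2 hd3 hd4 hd5
    refine ⟨B, hB1, hB2, ?_⟩
    rw [hB3, hAeq]
    have hLU : (⋃ m, L m) = ⋃ n, ⋃ (_ : n < N), C n := by
      ext z
      simp only [mem_iUnion]
      constructor
      · rintro ⟨m, hm⟩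
        by_cases h : m.unpair.1 < N
        · exact ⟨m.unpair.1, h, hLsub m h hm⟩
        · rw [hLempty m h] at hm; exact absurd hm (notMem_empty z)
      · rintro ⟨n, hn, hz⟩
        rw [← hDn5 n] at hz
        obtain ⟨j, hj⟩ := mem_iUnion.1 hz
        refine ⟨Nat.pair n j, ?_⟩
        simp only [hLdef, Nat.unpair_pair, if_pos hn]
        exact hj
    rw [hLU]
    ext z
    simp only [hTdef, hGdef, mem_union, mem_insert_iff, mem_iUnion]
    constructor
    · rintro (((rfl | ⟨k, hk⟩) | ⟨k, hk⟩) | ⟨n, hn, hz⟩)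
      · exact Or.inl rfl
      · exact Or.inr ⟨N + 2*k, hk⟩
      · exact Or.inr ⟨N + 2*k + 1, hk⟩
      · exact Or.inr ⟨n, hz⟩
    · rintro (rfl | ⟨n, hn⟩)
      · exact Or.inl (Or.inl (Or.inl rfl))
      · rcases Nat.lt_or_ge n N with h | h
        · exact Or.inr ⟨n, h, hn⟩
        · rcases Nat.even_or_odd (n - N) with ⟨k, hk⟩ | ⟨k, hk⟩
          · exact Or.inl (Or.inl (Or.inr ⟨k, by rw [show N + 2*k = n by omega]; exact hn⟩))
          · exact Or.inl (Or.inr ⟨k, by rw [show N + 2*k + 1 = n by omega]; exact hn⟩)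

section Scheme

variable {X : Type*} [MetricSpace X] [SecondCountableTopology X]
variable (hbasis : IsTopologicalBasis {s : Set X | IsClopen s})
variable (hperf : ∀ x : X, ¬ IsOpen ({x} : Set X))

noncomputable def splitF (A : {A : Set X // IsPiece A}) {ε : ℝ≥0∞} (hε : 0 < ε) :
    ℕ → {A : Set X // IsPiece A} :=
  fun n => ⟨(split hbasis hperf A.2 hε).choose n,
    ((split hbasis hperf A.2 hε).choose_spec.1 n).1⟩

lemma splitF_diam (A : {A : Set X // IsPiece A}) {ε : ℝ≥0∞} (hε : 0 < ε) (n : ℕ) :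
    EMetric.diam (splitF hbasis hperf A hε n).1 ≤ ε :=
  ((split hbasis hperf A.2 hε).choose_spec.1 n).2

lemma splitF_disj (A : {A : Set X // IsPiece A}) {ε : ℝ≥0∞} (hε : 0 < ε) {n m : ℕ}
    (h : n ≠ m) : Disjoint (splitF hbasis hperf A hε n).1 (splitF hbasis hperf A hε m).1 :=
  (split hbasis hperf A.2 hε).choose_spec.2.1 h

lemma splitF_union (A : {A : Set X // IsPiece A}) {ε : ℝ≥0∞} (hε : 0 < ε) :
    (⋃ n, (splitF hbasis hperf A hε n).1) = A.1 :=
  (split hbasis hperf A.2 hε).choose_spec.2.2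

lemma half_pow_pos (m : ℕ) : (0:ℝ≥0∞) < 2⁻¹ ^ m :=
  ENNReal.pow_pos (ENNReal.inv_pos.2 ENNReal.ofNat_ne_top) m

lemma half_lt_one : (2⁻¹:ℝ≥0∞) < 1 := by
  rw [ENNReal.inv_lt_one]; exact one_lt_two

lemma half_pow_tendsto : Tendsto (fun n : ℕ => (2⁻¹:ℝ≥0∞) ^ n) atTop (𝓝 0) :=
  ENNReal.tendsto_pow_atTop_nhds_zero_of_lt_one half_lt_one

variable [Nonempty X]

noncomputable def sch : List ℕ → {A : Set X // IsPiece A}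
  | [] => ⟨Set.univ, isPiece_of_clopen isClopen_univ univ_nonempty⟩
  | n :: s => splitF hbasis hperf (sch s) (half_pow_pos s.length) n

lemma sch_diam (n : ℕ) (s : List ℕ) :
    EMetric.diam (sch hbasis hperf (n :: s)).1 ≤ 2⁻¹ ^ s.length :=
  splitF_diam hbasis hperf _ _ n

lemma sch_union (s : List ℕ) :
    (⋃ n, (sch hbasis hperf (n :: s)).1) = (sch hbasis hperf s).1 :=
  splitF_union hbasis hperf _ _

lemma sch_disj (s : List ℕ) {n m : ℕ} (h : n ≠ m) :
    Disjoint (sch hbasis hperf (n :: s)).1 (sch hbasis hperf (m :: s)).1 :=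
  splitF_disj hbasis hperf _ _ h

lemma sch_sub (n : ℕ) (s : List ℕ) :
    (sch hbasis hperf (n :: s)).1 ⊆ (sch hbasis hperf s).1 := by
  rw [← sch_union hbasis hperf s]
  exact subset_iUnion (fun m => (sch hbasis hperf (m :: s)).1) n

def res (α : ℕ → ℕ) : ℕ → List ℕ
  | 0 => []
  | n+1 => α n :: res α n

lemma res_length (α : ℕ → ℕ) (n : ℕ) : (res α n).length = n := by
  induction n with
  | zero => rfl
  | succ n ih => simp [res, ih]

lemma res_agree (α β : ℕ → ℕ) (n : ℕ) (h : ∀ k < n, α k = β k) : res α n = res β n := by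
  induction n with
  | zero => rfl
  | succ n ih =>
    simp only [res]
    rw [h n n.lt_succ_self, ih (fun k hk => h k (hk.trans n.lt_succ_self))]

lemma sch_res_mono (α : ℕ → ℕ) {m n : ℕ} (h : m ≤ n) :
    (sch hbasis hperf (res α n)).1 ⊆ (sch hbasis hperf (res α m)).1 := by
  induction n with
  | zero => rw [Nat.le_zero.1 h]
  | succ n ih =>
    rcases Nat.lt_or_ge m (n+1) with h' | h'
    · exact (sch_sub hbasis hperf (α n) (res α n)).trans (ih (Nat.lt_succ_iff.1 h'))
    · rw [Nat.le_antisymm h h']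

lemma sch_res_diam (α : ℕ → ℕ) (n : ℕ) :
    EMetric.diam (sch hbasis hperf (res α (n+1))).1 ≤ 2⁻¹ ^ n := by
  have h := sch_diam hbasis hperf (α n) (res α n)
  rwa [res_length] at h

variable [CompleteSpace X]

lemma branch_exu (α : ℕ → ℕ) :
    ∃! y : X, ∀ n, y ∈ (sch hbasis hperf (res α n)).1 := by
  have hpts : ∀ n, ∃ p : X, p ∈ (sch hbasis hperf (res α n)).1 :=
    fun n => (sch hbasis hperf (res α n)).2.1
  choose pts hpts using hpts
  have hcauchy : CauchySeq pts := by
    rw [EMetric.cauchySeq_iff]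
    intro ε hε
    obtain ⟨n, hn⟩ := (half_pow_tendsto.eventually (Iio_mem_nhds hε)).exists
    refine ⟨n+1, fun m hm m' hm' => ?_⟩
    have h1 := sch_res_mono hbasis hperf α hm (hpts m)
    have h2 := sch_res_mono hbasis hperf α hm' (hpts m')
    calc edist (pts m) (pts m') ≤ EMetric.diam (sch hbasis hperf (res α (n+1))).1 :=
          EMetric.edist_le_diam_of_mem h1 h2
    _ ≤ 2⁻¹ ^ n := sch_res_diam hbasis hperf α n
    _ < ε := hn
  obtain ⟨y, hy⟩ := cauchySeq_tendsto_of_complete hcauchy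
  have hymem : ∀ n, y ∈ (sch hbasis hperf (res α n)).1 := by
    intro n
    refine (sch hbasis hperf (res α n)).2.isClosed.mem_of_tendsto hy ?_
    exact eventually_atTop.2 ⟨n, fun m hm => sch_res_mono hbasis hperf α hm (hpts m)⟩
  refine ⟨y, hymem, ?_⟩
  intro z hz
  by_contra hne
  have hpos : 0 < edist z y := by rwa [edist_pos]
  obtain ⟨n, hn⟩ := (half_pow_tendsto.eventually (Iio_mem_nhds hpos)).exists
  have hzy : edist z y ≤ 2⁻¹ ^ n :=
    (EMetric.edist_le_diam_of_mem (hz (n+1)) (hymem (n+1))).trans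
      (sch_res_diam hbasis hperf α n)
  exact absurd (hzy.trans_lt hn) (lt_irrefl _)

noncomputable def brp (α : ℕ → ℕ) : X := (branch_exu hbasis hperf α).choose

lemma brp_mem (α : ℕ → ℕ) (n : ℕ) : brp hbasis hperf α ∈ (sch hbasis hperf (res α n)).1 :=
  (branch_exu hbasis hperf α).choose_spec.1 n

lemma brp_unique (α : ℕ → ℕ) {z : X} (hz : ∀ n, z ∈ (sch hbasis hperf (res α n)).1) :
    z = brp hbasis hperf α :=
  (branch_exu hbasis hperf α).choose_spec.2 z hz

theorem main_metric (hbasis : IsTopologicalBasis {s : Set X | IsClopen s})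
    (hperf : ∀ x : X, ¬ IsOpen ({x} : Set X)) :
    ∃ f : (ℕ → ℕ) → X, Continuous f ∧ Function.Bijective f := by
  classical
  refine ⟨brp hbasis hperf, ?_, ?_, ?_⟩
  · -- continuity
    rw [continuous_iff_continuousAt]
    intro α
    rw [ContinuousAt, EMetric.tendsto_nhds]
    intro ε hε
    obtain ⟨n, hn⟩ := (half_pow_tendsto.eventually (Iio_mem_nhds hε)).exists
    have h1 : ∀ k : ℕ, ∀ᶠ β : ℕ → ℕ in 𝓝 α, β k = α k := by
      intro k
      have hopen : IsOpen {β : ℕ → ℕ | β k = α k} := by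
        have heq : {β : ℕ → ℕ | β k = α k} = (fun β : ℕ → ℕ => β k) ⁻¹' ({α k} : Set ℕ) := by
          ext β; simp
        rw [heq]
        exact (continuous_apply k).isOpen_preimage _ (isOpen_discrete _)
      exact hopen.mem_nhds rfl
    have hcyl : ∀ᶠ β : ℕ → ℕ in 𝓝 α, ∀ k ∈ Finset.range (n+1), β k = α k :=
      (Filter.eventually_all_finset (Finset.range (n+1))).2 fun k _ => h1 k
    filter_upwards [hcyl] with β hβ
    have hres : res β (n+1) = res α (n+1) :=
      res_agree β α (n+1) (fun k hk => hβ k (Finset.mem_range.2 hk))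
    have hm1 : brp hbasis hperf β ∈ (sch hbasis hperf (res α (n+1))).1 := by
      rw [← hres]; exact brp_mem hbasis hperf β (n+1)
    calc edist (brp hbasis hperf β) (brp hbasis hperf α)
        ≤ EMetric.diam (sch hbasis hperf (res α (n+1))).1 :=
          EMetric.edist_le_diam_of_mem hm1 (brp_mem hbasis hperf α (n+1))
    _ ≤ 2⁻¹ ^ n := sch_res_diam hbasis hperf α n
    _ < ε := hn
  · -- injectivity
    intro α β hfe
    by_contra hne
    have hne' : ∃ n, α n ≠ β n := by
      by_contra hcon
      push_neg at hcon
      exact hne (funext hcon)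
    set n0 := Nat.find hne' with hn0
    have hagree : ∀ k < n0, α k = β k := fun k hk => not_not.1 (Nat.find_min hne' hk)
    have hres : res α n0 = res β n0 := res_agree α β n0 hagree
    have hd : Disjoint (sch hbasis hperf (α n0 :: res α n0)).1
        (sch hbasis hperf (β n0 :: res α n0)).1 :=
      sch_disj hbasis hperf (res α n0) (Nat.find_spec hne')
    have h1 : brp hbasis hperf α ∈ (sch hbasis hperf (α n0 :: res α n0)).1 :=
      brp_mem hbasis hperf α (n0+1)
    have h2 : brp hbasis hperf β ∈ (sch hbasis hperf (β n0 :: res α n0)).1 := by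
      have := brp_mem hbasis hperf β (n0+1)
      simpa [res, ← hres] using this
    rw [hfe] at h1
    exact Set.disjoint_left.1 hd h1 h2
  · -- surjectivity
    intro y
    have hstep : ∀ s : List ℕ, y ∈ (sch hbasis hperf s).1 →
        ∃ n, y ∈ (sch hbasis hperf (n :: s)).1 := by
      intro s hs
      rw [← sch_union hbasis hperf s] at hs
      exact mem_iUnion.1 hs
    set ch : List ℕ → ℕ := fun s =>
      if h : y ∈ (sch hbasis hperf s).1 then (hstep s h).choose else 0 with hch
    set t : ℕ → List ℕ := fun n => Nat.rec [] (fun _ s => ch s :: s) n with ht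
    have htsucc : ∀ n, t (n+1) = ch (t n) :: t n := fun n => rfl
    have hmem : ∀ n, y ∈ (sch hbasis hperf (t n)).1 := by
      intro n
      induction n with
      | zero => exact mem_univ y
      | succ n ih =>
        rw [htsucc]
        have hcheq : ch (t n) = (hstep (t n) ih).choose := dif_pos ih
        rw [hcheq]
        exact (hstep (t n) ih).choose_spec
    set α : ℕ → ℕ := fun n => ch (t n) with hα
    have hres : ∀ n, res α n = t n := by
      intro n
      induction n with
      | zero => rfl
      | succ n ih => rw [htsucc]; simp only [res, hα]; rw [ih]
    refine ⟨α, ?_⟩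
    exact (brp_unique hbasis hperf α (fun n => by rw [hres n]; exact hmem n)).symm

end Scheme

end Stmt8

/-- The pair (X, Y) satisfies UU: there is an open set `U ⊆ X × Y` such that
every open `W ⊆ Y` is the cross section `{y | (x, y) ∈ U}` for exactly one `x`. -/
def UU (X Y : Type*) [TopologicalSpace X] [TopologicalSpace Y] : Prop :=
  ∃ U : Set (X × Y), IsOpen U ∧
    ∀ W : Set Y, IsOpen W → ∃! x : X, {y | (x, y) ∈ U} = W
theorem stmt_8 (X : Type*) [TopologicalSpace X] [PolishSpace X] [Nonempty X]
    (hbasis : TopologicalSpace.IsTopologicalBasis {s : Set X | IsClopen s})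
    (hperf : ∀ x : X, ¬ IsOpen ({x} : Set X)) :
    ∃ f : (ℕ → ℕ) → X, Continuous f ∧ Function.Bijective f := by
  letI := upgradeIsCompletelyMetrizable X
  exact Stmt8.main_metric hbasis hperf
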